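/- Let q = p^n ≡ 3 (mod 4) be an odd prime power with p ≠ 3, d = (q+3)/2, and χ the quadratic character of 𝔽_q. Suppose χ(2) = −1. Then the equation (x+1)^d − x^d = −1/2 has exactly 3 solutions in 𝔽_q if χ(3) = −1 or if (χ(−3) = −1 and χ((−1+s)/2) = −1 for a square root s of −2 in 𝔽_q), and exactly 1 solution otherwise. -/

import Mathlib

set_option maxHeartbeats 1600000 in
theorem stmt16 (p n : ℕ) (hp : p.Prime) (hp2 : p ≠ 2) (hp3 : p ≠ 3) (hn : 0 < n)
    (F : Type*) [Field F] [Fintype F] [DecidableEq F]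
    (hcard : Fintype.card F = p ^ n) (hq : p ^ n % 4 = 3)
    (h2 : quadraticChar F 2 = -1) :
    ((quadraticChar F 3 = -1 ∨ (quadraticChar F (-3) = -1 ∧ ∀ s : F, s ^ 2 = -2 → quadraticChar F ((-1 + s) / 2) = -1)) →
      Nat.card {x : F // (x + 1) ^ ((p ^ n + 3) / 2) - x ^ ((p ^ n + 3) / 2) = -2⁻¹} = 3) ∧
    (¬ (quadraticChar F 3 = -1 ∨ (quadraticChar F (-3) = -1 ∧ ∀ s : F, s ^ 2 = -2 → quadraticChar F ((-1 + s) / 2) = -1)) →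
      Nat.card {x : F // (x + 1) ^ ((p ^ n + 3) / 2) - x ^ ((p ^ n + 3) / 2) = -2⁻¹} = 1) := by
  have h0 : ((p : F)) ^ n = 0 := by
    rw [← Nat.cast_pow, ← hcard]; exact Nat.cast_card_eq_zero F
  have hp0 : (p : F) = 0 := pow_eq_zero_iff hn.ne' |>.mp h0
  have hdvd : ringChar F ∣ p := ringChar.dvd (by exact_mod_cast hp0)
  have hrcp : (ringChar F).Prime := CharP.char_is_prime F (ringChar F)
  have hrc : ringChar F = p := (Nat.prime_dvd_prime_iff_eq hrcp hp).mp hdvd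
  have hcharP : CharP F p := hrc ▸ ringChar.charP F
  have hF2 : ringChar F ≠ 2 := hrc ▸ hp2
  have two_ne : (2:F) ≠ 0 := by
    intro h
    have : p ∣ 2 := (CharP.cast_eq_zero_iff F p 2).mp (by exact_mod_cast h)
    exact hp2 ((Nat.prime_dvd_prime_iff_eq hp Nat.prime_two).mp this)
  have three_ne : (3:F) ≠ 0 := by
    intro h
    have : p ∣ 3 := (CharP.cast_eq_zero_iff F p 3).mp (by exact_mod_cast h)
    exact hp3 ((Nat.prime_dvd_prime_iff_eq hp Nat.prime_three).mp this)
  have four_ne : (4:F) ≠ 0 := by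
    have : (4:F) = 2*2 := by norm_num
    rw [this]; exact mul_ne_zero two_ne two_ne
  have hm1 : quadraticChar F (-1) = -1 := by
    rw [quadraticChar_neg_one hF2, hcard]
    exact ZMod.χ₄_nat_three_mod_four hq
  have hkey : ∀ y : F, y ^ ((p ^ n + 3) / 2) = ((quadraticChar F y : ℤ) : F) * y ^ 2 := by
    intro y
    have hd : (p ^ n + 3) / 2 = Fintype.card F / 2 + 2 := by rw [hcard]; omega
    rw [hd, pow_add, quadraticChar_eq_pow_of_char_ne_two' hF2]
  have hsq : ∀ (y z : F), z ≠ 0 → quadraticChar F (y * z ^ 2) = quadraticChar F y := by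
    intro y z hz
    rw [map_mul, quadraticChar_sq_one' hz, mul_one]
  have hneg : ∀ y : F, quadraticChar F (-y) = - quadraticChar F y := by
    intro y
    rw [show (-y : F) = -1 * y by ring, map_mul, hm1, neg_one_mul]
  have i2 : (2:F) * 2⁻¹ = 1 := mul_inv_cancel₀ two_ne
  have inv2_ne : (2⁻¹:F) ≠ 0 := inv_ne_zero two_ne
  have hm2 : quadraticChar F (-2) = 1 := by rw [hneg 2, h2]; norm_num
  have inv4 : ((4:F))⁻¹ = (2⁻¹)^2 := by
    rw [show (4:F) = 2^2 by norm_num]; exact (inv_pow 2 2).symm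
  have v1 : quadraticChar F (2⁻¹ : F) = -1 := by
    rw [show (2⁻¹:F) = 2 * (2⁻¹)^2 by field_simp, hsq 2 _ inv2_ne, h2]
  have v2 : quadraticChar F (-2⁻¹ : F) = 1 := by rw [hneg, v1]; norm_num
  have v3 : quadraticChar F ((4:F)⁻¹) = 1 := by
    rw [inv4]; exact quadraticChar_sq_one' inv2_ne
  have v5 : quadraticChar F (3 * (4:F)⁻¹) = quadraticChar F 3 := by
    rw [inv4, hsq 3 _ inv2_ne]
  have v6 : quadraticChar F (-(3 * (4:F)⁻¹)) = - quadraticChar F 3 := by rw [hneg, v5]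
  have v4 : quadraticChar F (-(4:F)⁻¹) = -1 := by rw [hneg, v3]
  obtain ⟨s, hs⟩ : ∃ s : F, s ^ 2 = -2 := by
    have hne : (-2 : F) ≠ 0 := neg_ne_zero.mpr two_ne
    obtain ⟨r, hr⟩ := (quadraticChar_one_iff_isSquare hne).mp hm2
    exact ⟨r, by rw [sq]; exact hr.symm⟩
  have s_ne : s ≠ 0 := by
    intro h; rw [h] at hs; exact two_ne (by linear_combination hs)
  set x₁ : F := (-1 + s)/2 with hx₁
  set x₂ : F := (-1 - s)/2 with hx₂
  have hx1x2 : x₂ = -(x₁ + 1) := by rw [hx₁, hx₂]; field_simp; ring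
  have hx21 : x₂ + 1 = -x₁ := by rw [hx₁, hx₂]; field_simp; ring
  have hprodval : x₁ * (x₁ + 1) = -(3 * (4:F)⁻¹) := by
    rw [hx₁]; field_simp; linear_combination 4*hs
  have hchiprod : quadraticChar F x₁ * quadraticChar F (x₁+1) = - quadraticChar F 3 := by
    rw [← map_mul, hprodval, v6]
  have hx1_ne : x₁ ≠ 0 := by
    intro h; rw [h, zero_mul] at hprodval
    apply three_ne
    have h4 : ((4:F)⁻¹) ≠ 0 := inv_ne_zero four_ne
    field_simp at hprodval
    linear_combination hprodval
  have hx11_ne : x₁ + 1 ≠ 0 := by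
    intro h; rw [h, mul_zero] at hprodval
    apply three_ne
    field_simp at hprodval
    linear_combination hprodval
  have hx2_ne : x₂ ≠ 0 := by rw [hx1x2]; exact neg_ne_zero.mpr hx11_ne
  have hx21_ne : x₂ + 1 ≠ 0 := by rw [hx21]; exact neg_ne_zero.mpr hx1_ne
  have hchix2 : quadraticChar F x₂ = - quadraticChar F (x₁+1) := by rw [hx1x2, hneg]
  have hchix21 : quadraticChar F (x₂+1) = - quadraticChar F x₁ := by rw [hx21, hneg]
  -- master
  have hmaster : ∀ x : F,
      (((quadraticChar F (x+1) : ℤ):F) * (x+1)^2 - ((quadraticChar F x : ℤ):F) * x^2 = -2⁻¹) ↔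
      (x = -2⁻¹ ∨ (quadraticChar F 3 = -1 ∧ (x = -(3 * (4:F)⁻¹) ∨ x = -(4:F)⁻¹)) ∨
       (quadraticChar F 3 = 1 ∧ quadraticChar F x₁ = -1 ∧ (x = x₁ ∨ x = x₂))) := by
    intro x
    constructor
    · intro h
      rcases eq_or_ne x 0 with rfl | hx0
      · exfalso
        rw [show (0:F)+1 = 1 by ring, map_one] at h
        push_cast at h
        apply three_ne
        field_simp at h
        linear_combination h
      rcases eq_or_ne (x+1) 0 with hx1' | hx1'
      · exfalso
        have hxm1 : x = -1 := by linear_combination hx1'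
        rw [hx1', hxm1, hm1] at h
        push_cast at h
        apply three_ne
        field_simp at h
        linear_combination h
      rcases quadraticChar_dichotomy hx0 with hb | hb <;>
        rcases quadraticChar_dichotomy hx1' with ha | ha <;>
        rw [ha, hb] at h <;> push_cast at h
      · -- χ(x+1)=1, χx=1 : x = -3/4
        have hx : x = -(3 * (4:F)⁻¹) := by
          field_simp at h ⊢
          linear_combination h
        refine Or.inr (Or.inl ⟨?_, Or.inl hx⟩)
        -- χ x = 1 gives χ(-3/4) = 1, so -χ3 = 1, χ3 = -1
        rw [hx, v6] at hb
        linarith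
      · -- χ(x+1)=-1, χx=1 : x = -1/2
        left
        have h' : (2*x+1)^2 = 0 := by
          field_simp at h
          linear_combination -h
        have h'' : 2*x+1 = 0 := by
          exact pow_eq_zero_iff (by norm_num) |>.mp h'
        field_simp
        linear_combination h''
      · -- χ(x+1)=1, χx=-1 : quadratic case
        have h' : (2*x+1-s)*(2*x+1+s) = 0 := by
          field_simp at h
          linear_combination h - hs
        have hx12 : x = x₁ ∨ x = x₂ := by
          rcases mul_eq_zero.mp h' with h'' | h''
          · left; rw [hx₁]; field_simp; linear_combination h''
          · right; rw [hx₂]; field_simp; linear_combination h''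
        refine Or.inr (Or.inr ⟨?_, ?_, hx12⟩)
        · -- χ3 = 1
          rcases hx12 with rfl | rfl
          · -- χ x₁ = -1, χ(x₁+1) = 1
            rw [hb, ha] at hchiprod; linarith
          · rw [hb] at hchix2; rw [ha] at hchix21
            have h1 : quadraticChar F (x₁+1) = 1 := by linarith
            have h2' : quadraticChar F x₁ = -1 := by linarith
            rw [h1, h2'] at hchiprod; linarith
        · rcases hx12 with rfl | rfl
          · exact hb
          · rw [ha] at hchix21; linarith
      · -- χ(x+1)=-1, χx=-1 : x = -1/4
        have hx : x = -(4:F)⁻¹ := by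
          field_simp at h ⊢
          linear_combination -h
        refine Or.inr (Or.inl ⟨?_, Or.inr hx⟩)
        have hx1v : x + 1 = 3 * (4:F)⁻¹ := by rw [hx]; field_simp; ring
        rw [hx1v, v5] at ha
        exact ha
    · intro h
      rcases h with rfl | ⟨h3, rfl | rfl⟩ | ⟨h3, hchi1, rfl | rfl⟩
      · rw [show (-2⁻¹ : F) + 1 = 2⁻¹ by field_simp; ring, v1, v2]
        push_cast
        field_simp
        ring
      · rw [show -(3*(4:F)⁻¹) + 1 = (4:F)⁻¹ by field_simp; ring, v3, v6, h3]
        push_cast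
        field_simp
        ring
      · rw [show -((4:F)⁻¹) + 1 = 3 * (4:F)⁻¹ by field_simp; ring, v4, v5, h3]
        push_cast
        field_simp
        ring
      · have h1 : quadraticChar F (x₁+1) = 1 := by
          rw [h3, hchi1] at hchiprod; linarith
        rw [h1, hchi1]
        push_cast
        rw [hx₁]
        field_simp
        linear_combination 2*hs
      · have h1 : quadraticChar F (x₁+1) = 1 := by
          rw [h3, hchi1] at hchiprod; linarith
        rw [hchix2, hchix21, h1, hchi1]
        push_cast
        rw [hx₂]
        field_simp
        linear_combination 2*hs
  -- combined iff
  have hiff : ∀ x : F,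
      ((x + 1) ^ ((p ^ n + 3) / 2) - x ^ ((p ^ n + 3) / 2) = -2⁻¹) ↔
      (x = -2⁻¹ ∨ (quadraticChar F 3 = -1 ∧ (x = -(3 * (4:F)⁻¹) ∨ x = -(4:F)⁻¹)) ∨
       (quadraticChar F 3 = 1 ∧ quadraticChar F x₁ = -1 ∧ (x = x₁ ∨ x = x₂))) := by
    intro x
    rw [hkey (x+1), hkey x]
    exact hmaster x
  have hcards : ∀ (S : Set F), {x : F | (x + 1) ^ ((p ^ n + 3) / 2) - x ^ ((p ^ n + 3) / 2) = -2⁻¹} = S →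
      Nat.card {x : F // (x + 1) ^ ((p ^ n + 3) / 2) - x ^ ((p ^ n + 3) / 2) = -2⁻¹} = S.ncard := by
    intro S hS
    rw [← hS]
    exact Nat.card_coe_set_eq _
  have hneg3 : quadraticChar F (-3) = - quadraticChar F 3 := hneg 3
  by_cases h3 : quadraticChar F 3 = -1
  · -- three solutions: -1/2, -3/4, -1/4
    have hset : {x : F | (x + 1) ^ ((p ^ n + 3) / 2) - x ^ ((p ^ n + 3) / 2) = -2⁻¹}
        = {(-2⁻¹ : F), -(3 * (4:F)⁻¹), -(4:F)⁻¹} := by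
      ext x
      simp only [Set.mem_setOf_eq, Set.mem_insert_iff, Set.mem_singleton_iff]
      rw [hiff x]
      constructor
      · rintro (h | ⟨_, h | h⟩ | ⟨h3', _⟩)
        · exact Or.inl h
        · exact Or.inr (Or.inl h)
        · exact Or.inr (Or.inr h)
        · rw [h3'] at h3; norm_num at h3
      · rintro (h | h | h)
        · exact Or.inl h
        · exact Or.inr (Or.inl ⟨h3, Or.inl h⟩)
        · exact Or.inr (Or.inl ⟨h3, Or.inr h⟩)
    have d1 : (-2⁻¹ : F) ≠ -(3 * (4:F)⁻¹) := by
      intro h; apply two_ne; field_simp at h; linear_combination h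
    have d2 : (-2⁻¹ : F) ≠ -(4:F)⁻¹ := by
      intro h; apply two_ne; field_simp at h; linear_combination -h
    have d3 : (-(3 * (4:F)⁻¹) : F) ≠ -(4:F)⁻¹ := by
      intro h; apply two_ne; field_simp at h; linear_combination -h
    have hc3 : Nat.card {x : F // (x + 1) ^ ((p ^ n + 3) / 2) - x ^ ((p ^ n + 3) / 2) = -2⁻¹} = 3 := by
      rw [hcards _ hset, Set.ncard_insert_of_notMem (by simp [d1, d2]),
        Set.ncard_pair d3]
    exact ⟨fun _ => hc3, fun hn' => absurd (Or.inl h3) hn'⟩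
  · have h3' : quadraticChar F 3 = 1 := ((quadraticChar_dichotomy three_ne).resolve_right h3)
    by_cases hc : quadraticChar F x₁ = -1
    · -- three solutions: -1/2, x₁, x₂
      have h1 : quadraticChar F (x₁+1) = 1 := by
        rw [h3', hc] at hchiprod; linarith
      have hset : {x : F | (x + 1) ^ ((p ^ n + 3) / 2) - x ^ ((p ^ n + 3) / 2) = -2⁻¹}
          = {(-2⁻¹ : F), x₁, x₂} := by
        ext x
        simp only [Set.mem_setOf_eq, Set.mem_insert_iff, Set.mem_singleton_iff]
        rw [hiff x]
        constructor
        · rintro (h | ⟨h3'', _⟩ | ⟨_, _, h | h⟩)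
          · exact Or.inl h
          · rw [h3''] at h3'; norm_num at h3'
          · exact Or.inr (Or.inl h)
          · exact Or.inr (Or.inr h)
        · rintro (h | h | h)
          · exact Or.inl h
          · exact Or.inr (Or.inr ⟨h3', hc, Or.inl h⟩)
          · exact Or.inr (Or.inr ⟨h3', hc, Or.inr h⟩)
      have d1 : (-2⁻¹ : F) ≠ x₁ := by
        rw [hx₁]; intro h; apply s_ne; field_simp at h; linear_combination -h
      have d2 : (-2⁻¹ : F) ≠ x₂ := by
        rw [hx₂]; intro h; apply s_ne; field_simp at h; linear_combination h
      have d3 : x₁ ≠ x₂ := by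
        rw [hx₁, hx₂]; intro h; apply s_ne; field_simp at h
        linear_combination (2⁻¹:F) * h - s * i2
      have hc3 : Nat.card {x : F // (x + 1) ^ ((p ^ n + 3) / 2) - x ^ ((p ^ n + 3) / 2) = -2⁻¹} = 3 := by
        rw [hcards _ hset, Set.ncard_insert_of_notMem (by simp [d1, d2]),
          Set.ncard_pair d3]
      have hH : quadraticChar F 3 = -1 ∨ (quadraticChar F (-3) = -1 ∧
          ∀ s' : F, s' ^ 2 = -2 → quadraticChar F ((-1 + s') / 2) = -1) := by
        refine Or.inr ⟨by rw [hneg3, h3'], ?_⟩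
        intro s' hs'
        have hfac : (s' - s) * (s' + s) = 0 := by linear_combination hs' - hs
        rcases mul_eq_zero.mp hfac with h' | h'
        · have : s' = s := by linear_combination h'
          rw [this, ← hx₁]; exact hc
        · have : s' = -s := by linear_combination h'
          rw [this, show ((-1 + -s)/2 : F) = (-1 - s)/2 by ring, ← hx₂, hchix2, h1]
      exact ⟨fun _ => hc3, fun hn' => absurd hH hn'⟩
    · have hc' : quadraticChar F x₁ = 1 := ((quadraticChar_dichotomy hx1_ne).resolve_right hc)
      have hset : {x : F | (x + 1) ^ ((p ^ n + 3) / 2) - x ^ ((p ^ n + 3) / 2) = -2⁻¹}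
          = {(-2⁻¹ : F)} := by
        ext x
        simp only [Set.mem_setOf_eq, Set.mem_singleton_iff]
        rw [hiff x]
        constructor
        · rintro (h | ⟨h3'', _⟩ | ⟨_, hcc, _⟩)
          · exact h
          · rw [h3''] at h3'; norm_num at h3'
          · rw [hcc] at hc'; norm_num at hc'
        · intro h; exact Or.inl h
      have hc1 : Nat.card {x : F // (x + 1) ^ ((p ^ n + 3) / 2) - x ^ ((p ^ n + 3) / 2) = -2⁻¹} = 1 := by
        rw [hcards _ hset, Set.ncard_singleton]
      have hnH : ¬ (quadraticChar F 3 = -1 ∨ (quadraticChar F (-3) = -1 ∧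
          ∀ s' : F, s' ^ 2 = -2 → quadraticChar F ((-1 + s') / 2) = -1)) := by
        rintro (h | ⟨_, hall⟩)
        · exact h3 h
        · have := hall s hs
          rw [← hx₁, hc'] at this
          norm_num at this
      exact ⟨fun hH' => absurd hH' hnH, fun _ => hc1⟩
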